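/- Let M = 2m+1 be odd, let μ be a probability measure on ℝ that is absolutely continuous with respect to Lebesgue measure, and let X = (X₁, …, X_M) have law μ^⊗M. For odd L = 2l+1, let T_X(L) be the M×L matrix with entries T_X(L)[i,j] = X_{l+1+i−j} (with X_t interpreted as 0 for t < 1 or t > M). Then for every odd L with L + 2 ≤ M, with probability one rank(T_X(L+2)) > rank(T_X(L)). -/

import Mathlib

open MeasureTheory

/-- Zero extension of a finite signal `x ∈ ℝ^M` to integer indices
(zero-based: `zext M x t = x t` for `0 ≤ t < M`, and `0` otherwise). -/
def zext (M : ℕ) (x : Fin M → ℝ) (t : ℤ) : ℝ :=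
  if h : 0 ≤ t ∧ t < (M : ℤ) then x ⟨t.toNat, by omega⟩ else 0

/-- The `M × (2l+1)` Toeplitz matrix representing 1-D convolution of the
signal `x ∈ ℝ^M` with a kernel of length `2l+1`; its zero-based `(i,j)`
entry is `x_{l+i-j}`, with the zero-extension convention. -/
def convMat (M l : ℕ) (x : Fin M → ℝ) : Matrix (Fin M) (Fin (2 * l + 1)) ℝ :=
  Matrix.of fun i j => zext M x ((l : ℤ) + (i : ℤ) - (j : ℤ))

lemma mvpoly_null : ∀ (n : ℕ) (p : MvPolynomial (Fin n) ℝ), p ≠ 0 →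
    (Measure.pi fun _ : Fin n => (volume : Measure ℝ)) {x | MvPolynomial.eval x p = 0} = 0 := by
  intro n
  induction n with
  | zero =>
      intro p hp
      obtain ⟨c, rfl⟩ := MvPolynomial.C_surjective (Fin 0) p
      have hc : c ≠ 0 := fun h => hp (by rw [h, map_zero])
      have : {x : Fin 0 → ℝ | MvPolynomial.eval x (MvPolynomial.C c) = 0} = ∅ := by
        ext x; simp [hc]
      rw [this]; simp
  | succ n ih =>
      intro p hp
      set q := MvPolynomial.finSuccEquiv ℝ n p with hqdef
      have hq : q ≠ 0 := fun h => hp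
        ((MvPolynomial.finSuccEquiv ℝ n).injective (h.trans (map_zero _).symm))
      have hex : ∃ i, q.coeff i ≠ 0 := by
        by_contra h
        push_neg at h
        exact hq (Polynomial.ext fun i => by simpa using h i)
      obtain ⟨i, hi⟩ := hex
      set e := MeasurableEquiv.piFinSuccAbove (fun _ : Fin (n+1) => ℝ) 0 with hedef
      have hmp := measurePreserving_piFinSuccAbove (fun _ : Fin (n+1) => (volume : Measure ℝ)) 0
      set T : Set (ℝ × (Fin n → ℝ)) :=
        {ys | MvPolynomial.eval (Fin.cons ys.1 ys.2) p = 0} with hTdef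
      have hcont : Continuous fun ys : ℝ × (Fin n → ℝ) =>
          MvPolynomial.eval (Fin.cons ys.1 ys.2) p := by
        apply (MvPolynomial.continuous_eval (p := p)).comp
        refine continuous_pi fun j => ?_
        refine Fin.cases ?_ ?_ j
        · exact continuous_fst
        · intro k
          have hk : Continuous fun a : ℝ × (Fin n → ℝ) => a.2 k := (continuous_apply k).comp continuous_snd
          simpa using hk
      have hT : MeasurableSet T := (isClosed_singleton.preimage hcont).measurableSet
      have hST : {x : Fin (n+1) → ℝ | MvPolynomial.eval x p = 0} = e ⁻¹' T := by
        ext x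
        have hx : (Fin.cons (x 0) (fun j => x ((0 : Fin (n+1)).succAbove j)) : Fin (n+1) → ℝ)
            = x := by
          funext j
          refine Fin.cases ?_ ?_ j
          · simp
          · intro k; simp [Fin.succAbove_zero]
        simp only [Set.mem_setOf_eq, Set.mem_preimage, hTdef, hedef,
          MeasurableEquiv.piFinSuccAbove_apply, Fin.insertNthEquiv_symm_apply]
        rw [Fin.removeNth_zero, Fin.cons_self_tail]
      rw [hST, hmp.measure_preimage_equiv]
      have hswap : ((volume : Measure ℝ).prod (Measure.pi fun _ : Fin n => (volume : Measure ℝ))) T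
          = ((Measure.pi fun _ : Fin n => (volume : Measure ℝ)).prod volume)
              (Prod.swap ⁻¹' T) := by
        rw [← Measure.prod_swap, Measure.map_apply measurable_swap hT]
      rw [hswap, Measure.measure_prod_null (hT.preimage measurable_swap)]
      have hae : ∀ᵐ s ∂(Measure.pi fun _ : Fin n => (volume : Measure ℝ)),
          MvPolynomial.eval s (q.coeff i) ≠ 0 := by
        rw [ae_iff]
        simpa using ih (q.coeff i) hi
      filter_upwards [hae] with s hs
      have heq : (Prod.mk s ⁻¹' (Prod.swap ⁻¹' T))
          = {y : ℝ | Polynomial.eval y (Polynomial.map (MvPolynomial.eval s) q) = 0} := by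
        ext y
        simp only [Set.mem_preimage, Set.mem_setOf_eq, hTdef, Prod.swap_prod_mk,
          Set.mem_setOf_eq]
        rw [MvPolynomial.eval_eq_eval_mv_eval']
      have hr : Polynomial.map (MvPolynomial.eval s) q ≠ 0 := by
        intro h
        apply hs
        have := congrArg (fun r => Polynomial.coeff r i) h
        simpa [Polynomial.coeff_map] using this
      have hfin : {y : ℝ | Polynomial.eval y (Polynomial.map (MvPolynomial.eval s) q) = 0}.Finite :=
        Polynomial.finite_setOf_isRoot hr
      simp only [Pi.zero_apply]
      rw [heq]
      exact hfin.measure_zero _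

lemma pi_ac : ∀ (n : ℕ) (μ : Measure ℝ), SigmaFinite μ → μ ≪ (volume : Measure ℝ) →
    (Measure.pi fun _ : Fin n => μ) ≪ (Measure.pi fun _ : Fin n => (volume : Measure ℝ)) := by
  intro n
  induction n with
  | zero =>
      intro μ _ _ s hs
      rcases Set.eq_empty_or_nonempty s with rfl | hne
      · simp
      · exfalso
        have hsu : s = Set.univ := by
          obtain ⟨x, hx⟩ := hne
          ext y
          simp only [Set.mem_univ, iff_true]
          rwa [Subsingleton.elim y x]
        rw [hsu, Measure.pi_univ] at hs
        simp at hs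
  | succ n ih =>
      intro μ hσ hμ
      haveI := hσ
      have h1 := measurePreserving_piFinSuccAbove (fun _ : Fin (n+1) => μ) 0
      have h2 := measurePreserving_piFinSuccAbove (fun _ : Fin (n+1) => (volume : Measure ℝ)) 0
      set e := MeasurableEquiv.piFinSuccAbove (fun _ : Fin (n+1) => ℝ) 0 with hedef
      calc (Measure.pi fun _ : Fin (n+1) => μ)
          = Measure.map e.symm (μ.prod (Measure.pi fun _ : Fin n => μ)) :=
            (h1.symm e).map_eq.symm
        _ ≪ Measure.map e.symm
              ((volume : Measure ℝ).prod (Measure.pi fun _ : Fin n => (volume : Measure ℝ))) :=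
            (hμ.prod (ih μ hσ hμ)).map e.symm.measurable
        _ = Measure.pi fun _ : Fin (n+1) => (volume : Measure ℝ) := (h2.symm e).map_eq

noncomputable def toepPoly (m : ℕ) :
    Matrix (Fin (2*m+1)) (Fin (2*m+1)) (MvPolynomial (Fin (2*m+1)) ℝ) :=
  Matrix.of fun i j =>
    if h : 0 ≤ (m:ℤ) + (i:ℤ) - (j:ℤ) ∧ (m:ℤ) + (i:ℤ) - (j:ℤ) < ((2*m+1 : ℕ) : ℤ)
    then MvPolynomial.X ⟨((m:ℤ) + (i:ℤ) - (j:ℤ)).toNat, by omega⟩ else 0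

lemma toepPoly_eval (m : ℕ) (x : Fin (2*m+1) → ℝ) :
    (toepPoly m).map (MvPolynomial.eval x) = convMat (2*m+1) m x := by
  ext i j
  simp only [toepPoly, convMat, zext, Matrix.map_apply, Matrix.of_apply]
  split_ifs with h
  · simp
  · simp

lemma convMat_delta (m : ℕ) :
    convMat (2*m+1) m (fun k => if (k : ℕ) = m then 1 else 0) = 1 := by
  ext ⟨i, hi⟩ ⟨j, hj⟩
  simp only [convMat, zext, Matrix.of_apply, Matrix.one_apply, Fin.mk.injEq, Fin.val_mk]
  split_ifs <;> first | rfl | omega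

lemma toepPoly_det_ne_zero (m : ℕ) : (toepPoly m).det ≠ 0 := by
  intro h
  have := congrArg (MvPolynomial.eval (fun k : Fin (2*m+1) => if (k : ℕ) = m then 1 else 0)) h
  rw [map_zero, RingHom.map_det, RingHom.mapMatrix_apply, toepPoly_eval, convMat_delta, Matrix.det_one] at this
  exact one_ne_zero this

lemma rank_convMat_of_det {m : ℕ} (l : ℕ) (hl : l ≤ m) (x : Fin (2*m+1) → ℝ)
    (hx : (convMat (2*m+1) m x).det ≠ 0) : (convMat (2*m+1) l x).rank = 2*l+1 := by
  have hl2 : ∀ j : Fin (2*l+1), (j : ℕ) + (m - l) < 2*m+1 := fun j => by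
    have := j.isLt; omega
  set f : Fin (2*l+1) → Fin (2*m+1) := fun j => ⟨(j : ℕ) + (m - l), hl2 j⟩ with hf
  set E : Matrix (Fin (2*m+1)) (Fin (2*l+1)) ℝ :=
    Matrix.of fun c j => if c = f j then 1 else 0 with hE
  have hAE : convMat (2*m+1) m x * E = convMat (2*m+1) l x := by
    ext i j
    rw [Matrix.mul_apply]
    simp only [hE, Matrix.of_apply, mul_ite, mul_one, mul_zero]
    rw [Finset.sum_ite_eq' Finset.univ (f j) (fun c => convMat (2*m+1) m x i c)]
    simp only [Finset.mem_univ, if_true]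
    show zext (2*m+1) x ((m:ℤ) + (i:ℤ) - ((f j : Fin (2*m+1)) : ℤ))
        = zext (2*m+1) x ((l:ℤ) + (i:ℤ) - (j:ℤ))
    congr 1
    have : ((f j : Fin (2*m+1)) : ℤ) = (j : ℤ) + ((m : ℤ) - (l : ℤ)) := by
      simp only [hf]
      have : (((j : ℕ) + (m - l) : ℕ) : ℤ) = (j : ℤ) + ((m - l : ℕ) : ℤ) := by push_cast; ring
      rw [Fin.val_mk] at *
      push_cast
      omega
    rw [this]; ring
  have hdet : IsUnit (convMat (2*m+1) m x).det := isUnit_iff_ne_zero.mpr hx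
  rw [← hAE, Matrix.rank_mul_eq_right_of_isUnit_det _ _ hdet]
  have hET : Matrix.transpose E * E = 1 := by
    ext j j'
    rw [Matrix.mul_apply]
    simp only [hE, Matrix.transpose_apply, Matrix.of_apply, ite_mul, one_mul, zero_mul]
    rw [Finset.sum_ite_eq' Finset.univ (f j) (fun c => if c = f j' then 1 else 0)]
    simp only [Finset.mem_univ, if_true, Matrix.one_apply]
    have hfi : f j = f j' ↔ j = j' := by
      constructor
      · intro h
        rw [Fin.ext_iff] at h ⊢
        simp only [hf, Fin.val_mk] at h
        omega
      · intro h; rw [h]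
    by_cases h : j = j'
    · simp [h]
    · rw [if_neg (fun hh => h (hfi.mp hh)), if_neg h]
  have h1 : (Matrix.transpose E * E).rank = E.rank := Matrix.rank_transpose_mul_self E
  rw [hET, Matrix.rank_one] at h1
  rw [← h1, Fintype.card_fin]

/-- Equation (8) of the paper: if the entries of `X ∈ ℝ^M` (`M = 2m+1`) are
i.i.d. with a law absolutely continuous with respect to Lebesgue measure,
then for every odd kernel size `L = 2l+1` with `L + 2 ≤ M`, almost surely
`rank (T_X(L+2)) > rank (T_X(L))`. -/
theorem rank_strict_increase_almost_surely
    (m : ℕ) (μ : Measure ℝ) [IsProbabilityMeasure μ] (hμ : μ ≪ volume) :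
    ∀ l : ℕ, 2 * l + 3 ≤ 2 * m + 1 →
      (Measure.pi fun _ : Fin (2 * m + 1) => μ)
        {x : Fin (2 * m + 1) → ℝ |
          (convMat (2 * m + 1) l x).rank < (convMat (2 * m + 1) (l + 1) x).rank}
        = 1 := by
  intro l hl
  set P := Measure.pi fun _ : Fin (2 * m + 1) => μ with hP
  set S := {x : Fin (2 * m + 1) → ℝ |
      (convMat (2 * m + 1) l x).rank < (convMat (2 * m + 1) (l + 1) x).rank} with hS
  set N := {x : Fin (2 * m + 1) → ℝ | (convMat (2 * m + 1) m x).det = 0} with hN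
  have hNpoly : N = {x : Fin (2 * m + 1) → ℝ |
      MvPolynomial.eval x (toepPoly m).det = 0} := by
    ext x
    simp only [hN, Set.mem_setOf_eq]
    rw [RingHom.map_det, RingHom.mapMatrix_apply, toepPoly_eval]
  have h0 : (Measure.pi fun _ : Fin (2 * m + 1) => (volume : Measure ℝ)) N = 0 := by
    rw [hNpoly]
    exact mvpoly_null _ _ (toepPoly_det_ne_zero m)
  have h1 : P N = 0 := pi_ac (2 * m + 1) μ inferInstance hμ h0
  have hsub : Sᶜ ⊆ N := by
    intro x hx
    by_contra hdet
    apply hx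
    simp only [hN, Set.mem_setOf_eq] at hdet
    have r1 : (convMat (2 * m + 1) l x).rank = 2 * l + 1 :=
      rank_convMat_of_det l (by omega) x hdet
    have r2 : (convMat (2 * m + 1) (l + 1) x).rank = 2 * (l + 1) + 1 :=
      rank_convMat_of_det (l + 1) (by omega) x hdet
    simp only [hS, Set.mem_setOf_eq, r1, r2]
    omega
  have h2 : P Sᶜ = 0 := measure_mono_null hsub h1
  refine le_antisymm prob_le_one ?_
  calc (1 : ENNReal) = P Set.univ := measure_univ.symm
    _ = P (S ∪ Sᶜ) := by rw [Set.union_compl_self]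
    _ ≤ P S + P Sᶜ := measure_union_le _ _
    _ = P S := by rw [h2, add_zero]
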